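/- Let the interpretation for the constraints be the structure of the real numbers, and consider the programs P₀ = { p(X) ← ¬q(X), q(X) ← X ≥ 0, q(X) ← q(X) } and P₂ = { p(X) ← X < 0 ∧ p(X), q(X) ← X ≥ 0, q(X) ← q(X) }. Then for every real number a < 0, the atom p(a) belongs to the perfect model M(P₀) but p(a) does not belong to the perfect model M(P₂). (P₂ is obtained from P₀ by negative unfolding of the first clause followed by folding it using the definition p(X) ← ¬q(X), showing that this combination of steps is not correct.) -/

import Mathlib

namespace CLP

/-! ### The set `W` of countable ordinals -/

/-- `W` : the set of countable ordinals. -/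
abbrev W : Type 1 := {o : Ordinal.{0} // o < (Cardinal.aleph 1).ord}

theorem natW_lt (n : ℕ) : (n : Ordinal.{0}) < (Cardinal.aleph 1).ord := by
  refine Cardinal.lt_ord.mpr ?_
  simpa using (Cardinal.nat_lt_aleph0 n).trans Cardinal.aleph0_lt_aleph_one

/-- natural numbers as countable ordinals -/
def natW (n : ℕ) : W := ⟨n, natW_lt n⟩

/-- the zero ordinal as an element of `W` -/
def zeroW : W := natW 0

theorem succW_lt {o : Ordinal.{0}} (h : o < (Cardinal.aleph 1).ord) :
    o + 1 < (Cardinal.aleph 1).ord := by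
  have hlim : Order.IsSuccLimit ((Cardinal.aleph 1).ord) :=
    Cardinal.isSuccLimit_ord (Cardinal.aleph0_le_aleph 1)
  rw [← Order.succ_eq_add_one]
  exact hlim.succ_lt h

/-- the successor operation on countable ordinals (`σ(A) + 1`) -/
def succW (o : W) : W := ⟨o.1 + 1, succW_lt o.2⟩

/-! ### Syntax and semantics of constraint logic programs

Atoms, constraints, and clauses are represented semantically: an atom with variables
in `V` is a user-defined predicate symbol (from `Pu`) together with the function
mapping each valuation `v : V → D` to the tuple of values of its argument terms, and a
constraint is represented by its satisfaction predicate on valuations (the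
interpretation `𝒟` for the constraints, with carrier `D`, is thereby fixed). -/

/-- An atom: a user-defined predicate symbol together with its (semantically
represented) tuple of argument terms. -/
structure SAtm (V D Pu : Type) where
  pred : Pu
  args : (V → D) → List D

/-- Ground atoms: the base `B_𝒟` is `{p(d₁,…,dₙ) | p ∈ Pred_u, dᵢ ∈ D}`. -/
abbrev GrAtm (Pu D : Type) := Pu × List D

variable {V D Pu : Type}

/-- the ground atom `v(A)` obtained by applying the valuation `v` to the atom `A` -/
def SAtm.eval (A : SAtm V D Pu) (v : V → D) : GrAtm Pu D := (A.pred, A.args v)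

/-- A clause `H ← c ∧ L₁ ∧ … ∧ Lₘ`: a head atom `H`, a constraint `c`, and a body,
i.e. a list of literals; a literal is a pair of a sign (`true` = positive literal `A`,
`false` = negative literal `¬A`) and an atom. -/
structure SClause (V D Pu : Type) where
  head : SAtm V D Pu
  constr : (V → D) → Prop
  body : List (Bool × SAtm V D Pu)

/-- A constraint logic program: a set of clauses (finiteness is stated separately). -/
abbrev SProg (V D Pu : Type) := Set (SClause V D Pu)

/-- truth of a ground literal in a `D`-interpretation `I` -/
def litTrue (I : Set (GrAtm Pu D)) (l : Bool × GrAtm Pu D) : Prop :=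
  if l.1 then l.2 ∈ I else l.2 ∉ I

/-- truth of the ground instance `v(γ)` of the clause `γ` in the `D`-interpretation `I` -/
def SClause.groundTrue (γ : SClause V D Pu) (I : Set (GrAtm Pu D)) (v : V → D) : Prop :=
  γ.constr v → (∀ l ∈ γ.body, litTrue I (l.1, l.2.eval v)) → γ.head.eval v ∈ I

/-- `I` is a `D`-model of the program `P` -/
def isModel (I : Set (GrAtm Pu D)) (P : SProg V D Pu) : Prop :=
  ∀ γ ∈ P, ∀ v, γ.groundTrue I v

/-- the ground instance `v(γ)` of the clause `γ` is locally stratified w.r.t. `σ` -/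
def SClause.locStrat (σ : GrAtm Pu D → W) (γ : SClause V D Pu) (v : V → D) : Prop :=
  γ.constr v → ∀ l ∈ γ.body,
    (l.1 = true → σ (l.2.eval v) ≤ σ (γ.head.eval v)) ∧
    (l.1 = false → σ (l.2.eval v) < σ (γ.head.eval v))

/-- `P` is locally stratified w.r.t. the local stratification `σ : B_𝒟 → W` -/
def locStratWrt (σ : GrAtm Pu D → W) (P : SProg V D Pu) : Prop :=
  ∀ γ ∈ P, ∀ v, γ.locStrat σ v

/-- `P` is locally stratified -/
def LocallyStratified (P : SProg V D Pu) : Prop := ∃ σ, locStratWrt σ P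

/-- `I ≺ J` : `I` is preferable to `J` w.r.t. the local stratification `σ` -/
def pref (σ : GrAtm Pu D → W) (I J : Set (GrAtm Pu D)) : Prop :=
  ∀ A₁ ∈ I \ J, ∃ A₂ ∈ J \ I, σ A₂ < σ A₁

/-- `M` is a perfect model of `P` w.r.t. the local stratification `σ`:
a `D`-model preferable to every other `D`-model of `P` -/
def PerfectModelWrt (σ : GrAtm Pu D → W) (P : SProg V D Pu) (M : Set (GrAtm Pu D)) : Prop :=
  isModel M P ∧ ∀ N, isModel N P → N ≠ M → pref σ M N

/-- `M` is a perfect model of `P` (w.r.t. some local stratification for `P`) -/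
def IsPerfectModel (P : SProg V D Pu) (M : Set (GrAtm Pu D)) : Prop :=
  ∃ σ, locStratWrt σ P ∧ PerfectModelWrt σ P M

/-! ### Predicate dependencies -/

/-- the predicate `p` immediately depends on the predicate `q` in `P` -/
def immDep (P : SProg V D Pu) (p q : Pu) : Prop :=
  ∃ γ ∈ P, γ.head.pred = p ∧ ∃ l ∈ γ.body, (l.2).pred = q

/-- the predicate `p` depends on the predicate `q` in `P` -/
def dependsOn (P : SProg V D Pu) : Pu → Pu → Prop := Relation.TransGen (immDep P)

/-- `Def(p, P)` : the definition of the predicate `p` in `P` -/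
def DefOf (p : Pu) (P : SProg V D Pu) : SProg V D Pu := {γ ∈ P | γ.head.pred = p}

/-! ### Proof trees -/

/-- Finite trees whose internal nodes are ground atoms; the children of a node are
either subtrees (corresponding to positive literals) or leaves labelled by a ground
atom `B` (corresponding to negative literals `¬B`). A node with the empty list of
children is a node whose unique child is the empty conjunction `true`. -/
inductive PT (Pu D : Type) : Type where
  | node (A : GrAtm Pu D) (children : List (PT Pu D ⊕ GrAtm Pu D)) : PT Pu D

/-- the ground atom at the root of a tree -/
def PT.root : PT Pu D → GrAtm Pu D
  | .node A _ => A

/-- the ground literal corresponding to a child of a node of a tree -/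
def childLit : PT Pu D ⊕ GrAtm Pu D → Bool × GrAtm Pu D
  | .inl t => (true, t.root)
  | .inr B => (false, B)

/-- Validity of a tree w.r.t. a program `P` and an "oracle" `O` for the negative
leaves: each node `A` with children `L₁,…,Lᵣ` must be obtained from a ground instance
`A ← c ∧ L₁ ∧ … ∧ Lᵣ` (with `𝒟 ⊨ c`) of a clause of `P`, and every negative leaf
`¬B` must satisfy `O B`. -/
inductive PT.ValidW (P : SProg V D Pu) (O : GrAtm Pu D → Prop) : PT Pu D → Prop where
  | node {A : GrAtm Pu D} {cs : List (PT Pu D ⊕ GrAtm Pu D)}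
      (hc : ∃ γ ∈ P, ∃ v, γ.constr v ∧ γ.head.eval v = A ∧
        γ.body.map (fun l => (l.1, l.2.eval v)) = cs.map childLit)
      (hpos : ∀ t, Sum.inl t ∈ cs → PT.ValidW P O t)
      (hneg : ∀ B, Sum.inr B ∈ cs → O B) :
      PT.ValidW P O (.node A cs)

/-- `HasPTAux σ P α A` holds iff there is a proof tree for `A` and `P`, where a
negative leaf `¬B` is allowed only if there is no proof tree for `B` and `P` among
the proof trees for ground atoms of stratum `< α`. -/
def HasPTAux (σ : GrAtm Pu D → W) (P : SProg V D Pu) (α : W) (A : GrAtm Pu D) : Prop :=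
  ∃ T : PT Pu D, T.root = A ∧
    PT.ValidW P (fun B => ∀ _hlt : σ B < α, ¬ HasPTAux σ P (σ B) B) T
termination_by α.1
decreasing_by exact _hlt

/-- there exists a proof tree for the ground atom `A` and the program `P` -/
def HasProofTree (σ : GrAtm Pu D → W) (P : SProg V D Pu) (A : GrAtm Pu D) : Prop :=
  HasPTAux σ P (σ A) A

/-- `T` is a proof tree for the ground atom `A` and the program `P` -/
def IsProofTree (σ : GrAtm Pu D → W) (P : SProg V D Pu) (A : GrAtm Pu D) (T : PT Pu D) : Prop :=
  T.root = A ∧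
    PT.ValidW P (fun B => ∀ _hlt : σ B < σ A, ¬ HasPTAux σ P (σ B) B) T

/-! ### The measure `μ` -/

mutual
  /-- `size(T)` : the number of atoms occurring at non-leaf nodes of `T` -/
  inductive PT.HasSize : PT Pu D → ℕ → Prop where
    | node {A cs n} : ChildrenSize cs n → PT.HasSize (.node A cs) (1 + n)
  /-- total size of the subtrees among a list of children -/
  inductive ChildrenSize : List (PT Pu D ⊕ GrAtm Pu D) → ℕ → Prop where
    | nil : ChildrenSize [] 0
    | inl {t cs n m} : PT.HasSize t n → ChildrenSize cs m →
        ChildrenSize (Sum.inl t :: cs) (n + m)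
    | inr {B cs m} : ChildrenSize cs m → ChildrenSize (Sum.inr B :: cs) m
end

/-- the (non-strict) lexicographic ordering `≤_lex` on `W × ℕ` -/
def wnLE (a b : W × ℕ) : Prop := a.1 < b.1 ∨ (a.1 = b.1 ∧ a.2 ≤ b.2)

/-- the strict lexicographic ordering `<_lex` on `W × ℕ` -/
def wnLT (a b : W × ℕ) : Prop := a.1 < b.1 ∨ (a.1 = b.1 ∧ a.2 < b.2)

/-- `⟨α₁,m₁⟩ ⊕ ⟨α₂,m₂⟩ = ⟨max(α₁,α₂), m₁+m₂⟩` -/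
noncomputable def oplus (a b : W × ℕ) : W × ℕ := (max a.1 b.1, a.2 + b.2)

/-- `μ(A,P) = min_lex {⟨σ(A), size(T)⟩ | T is a proof tree for A and P}`:
`muAtomIs σ P A m` states that `μ(A,P)` is defined and equal to `m`. -/
def muAtomIs (σ : GrAtm Pu D → W) (P : SProg V D Pu) (A : GrAtm Pu D) (m : W × ℕ) : Prop :=
  (∃ (T : PT Pu D) (sz : ℕ), IsProofTree σ P A T ∧ T.HasSize sz ∧ m = (σ A, sz)) ∧
  (∀ (T : PT Pu D) (sz : ℕ), IsProofTree σ P A T → T.HasSize sz → wnLE m (σ A, sz))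

/-- `μ` on ground literals: `μ(A,P)` for an atom, `⟨σ(A),0⟩` for a negated atom `¬A` -/
def muLitIs (σ : GrAtm Pu D → W) (P : SProg V D Pu) :
    Bool × GrAtm Pu D → W × ℕ → Prop
  | (true, A), m => muAtomIs σ P A m
  | (false, A), m => m = (σ A, 0)

/-- `μ(L₁ ∧ … ∧ Lₙ, P) = μ(L₁,P) ⊕ … ⊕ μ(Lₙ,P)` -/
inductive muGoalIs (σ : GrAtm Pu D → W) (P : SProg V D Pu) :
    List (Bool × GrAtm Pu D) → W × ℕ → Prop where
  | nil : muGoalIs σ P [] (zeroW, 0)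
  | cons {l G m mg} : muLitIs σ P l m → muGoalIs σ P G mg →
      muGoalIs σ P (l :: G) (oplus m mg)

end CLP

namespace Stmt12

open CLP

/-- the user-defined predicate symbols `p` and `q` -/
inductive Pd where
  | p | q
deriving DecidableEq

/-- the atom `p(X)` (one variable, interpreted over the reals) -/
def atomP : SAtm Unit ℝ Pd := ⟨Pd.p, fun v => [v ()]⟩
/-- the atom `q(X)` -/
def atomQ : SAtm Unit ℝ Pd := ⟨Pd.q, fun v => [v ()]⟩

/-- `P₀ = { p(X) ← ¬q(X),  q(X) ← X ≥ 0,  q(X) ← q(X) }` -/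
def P0 : SProg Unit ℝ Pd :=
  { ⟨atomP, fun _ => True, [(false, atomQ)]⟩,
    ⟨atomQ, fun v => v () ≥ 0, []⟩,
    ⟨atomQ, fun _ => True, [(true, atomQ)]⟩ }

/-- `P₂ = { p(X) ← X < 0 ∧ p(X),  q(X) ← X ≥ 0,  q(X) ← q(X) }` -/
def P2 : SProg Unit ℝ Pd :=
  { ⟨atomP, fun v => v () < 0, [(true, atomP)]⟩,
    ⟨atomQ, fun v => v () ≥ 0, []⟩,
    ⟨atomQ, fun _ => True, [(true, atomQ)]⟩ }

/-! ### Auxiliary definitions and lemmas -/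

/-- intended model of `P₀` -/
def M0 : Set (GrAtm Pd ℝ) :=
  {x | ∃ b : ℝ, (x = (Pd.q, [b]) ∧ 0 ≤ b) ∨ (x = (Pd.p, [b]) ∧ b < 0)}

/-- intended model of `P₂` -/
def M2 : Set (GrAtm Pd ℝ) := {x | ∃ b : ℝ, x = (Pd.q, [b]) ∧ 0 ≤ b}

lemma q_mem_M0 {b : ℝ} : ((Pd.q, [b]) : GrAtm Pd ℝ) ∈ M0 ↔ 0 ≤ b := by
  simp [M0, Prod.ext_iff]

lemma p_mem_M0 {b : ℝ} : ((Pd.p, [b]) : GrAtm Pd ℝ) ∈ M0 ↔ b < 0 := by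
  simp [M0, Prod.ext_iff]

lemma q_mem_M2 {b : ℝ} : ((Pd.q, [b]) : GrAtm Pd ℝ) ∈ M2 ↔ 0 ≤ b := by
  simp [M2, Prod.ext_iff]

lemma p_not_mem_M2 {b : ℝ} : ((Pd.p, [b]) : GrAtm Pd ℝ) ∉ M2 := by
  simp [M2, Prod.ext_iff]

/-- stratification for `P₀` -/
def sig0 : GrAtm Pd ℝ → W := fun A => match A.1 with
  | Pd.p => natW 1
  | Pd.q => natW 0

lemma natW_lt_natW {m n : ℕ} (h : m < n) : natW m < natW n := by
  simpa [natW, Subtype.mk_lt_mk] using (Nat.cast_lt (α := Ordinal.{0})).mpr h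

lemma strat0 : locStratWrt sig0 P0 := by
  intro γ hγ v
  rcases hγ with h | h | h <;> subst h <;>
    intro _ l hl <;> simp only [List.mem_singleton] at hl <;> try subst hl
  · exact ⟨by simp, fun _ => natW_lt_natW (by norm_num)⟩
  · simp at hl
  · exact ⟨fun _ => le_refl _, by simp⟩

lemma strat2 : locStratWrt (fun _ => zeroW) P2 := by
  intro γ hγ v
  rcases hγ with h | h | h <;> subst h <;>
    intro _ l hl <;> simp only [List.mem_singleton] at hl <;> try subst hl
  · exact ⟨fun _ => le_refl _, by simp⟩
  · simp at hl
  · exact ⟨fun _ => le_refl _, by simp⟩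

lemma model_M0 : isModel M0 P0 := by
  intro γ hγ v
  rcases hγ with h | h | h <;> subst h <;> intro hc hb
  · have := hb (false, atomQ) (by simp)
    simp only [litTrue, SAtm.eval, atomQ, atomP] at this ⊢
    have : ¬ (0 : ℝ) ≤ v () := fun h0 => this (q_mem_M0.mpr h0)
    exact p_mem_M0.mpr (lt_of_not_ge this)
  · exact q_mem_M0.mpr hc
  · have := hb (true, atomQ) (by simp)
    simpa [litTrue, SAtm.eval, atomQ] using this

lemma model_M2 : isModel M2 P2 := by
  intro γ hγ v
  rcases hγ with h | h | h <;> subst h <;> intro hc hb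
  · have := hb (true, atomP) (by simp)
    simp only [litTrue, SAtm.eval, atomP] at this
    exact absurd this p_not_mem_M2
  · exact q_mem_M2.mpr hc
  · have := hb (true, atomQ) (by simp)
    simpa [litTrue, SAtm.eval, atomQ] using this

/-- every model of `P₀` contains `q(b)` for `b ≥ 0` -/
lemma forcedQ0 {N : Set (GrAtm Pd ℝ)} (hN : isModel N P0) {b : ℝ} (hb : 0 ≤ b) :
    ((Pd.q, [b]) : GrAtm Pd ℝ) ∈ N := by
  have := hN ⟨atomQ, fun v => v () ≥ 0, []⟩ (by simp [P0]) (fun _ => b)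
  exact this hb (by simp)

/-- every model of `P₂` contains `q(b)` for `b ≥ 0` -/
lemma forcedQ2 {N : Set (GrAtm Pd ℝ)} (hN : isModel N P2) {b : ℝ} (hb : 0 ≤ b) :
    ((Pd.q, [b]) : GrAtm Pd ℝ) ∈ N := by
  have := hN ⟨atomQ, fun v => v () ≥ 0, []⟩ (by simp [P2]) (fun _ => b)
  exact this hb (by simp)

/-- in every model of `P₀`: if `q(b) ∉ N` then `p(b) ∈ N` -/
lemma clause1P0 {N : Set (GrAtm Pd ℝ)} (hN : isModel N P0) {b : ℝ}
    (hq : ((Pd.q, [b]) : GrAtm Pd ℝ) ∉ N) : ((Pd.p, [b]) : GrAtm Pd ℝ) ∈ N := by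
  have := hN ⟨atomP, fun _ => True, [(false, atomQ)]⟩ (by simp [P0]) (fun _ => b)
  refine this trivial ?_
  intro l hl
  simp only [List.mem_singleton] at hl
  subst hl
  simpa [litTrue, SAtm.eval, atomQ] using hq

lemma perfect_M0 : PerfectModelWrt sig0 P0 M0 := by
  refine ⟨model_M0, fun N hN _ A₁ hA₁ => ?_⟩
  obtain ⟨hA₁M, hA₁N⟩ := hA₁
  rcases hA₁M with ⟨b, ⟨rfl, hb⟩ | ⟨rfl, hb⟩⟩
  · exact absurd (forcedQ0 hN hb) hA₁N
  · have hq : ((Pd.q, [b]) : GrAtm Pd ℝ) ∈ N := by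
      by_contra hq
      exact hA₁N (clause1P0 hN hq)
    refine ⟨(Pd.q, [b]), ⟨hq, fun h => absurd (q_mem_M0.mp h) (not_le.mpr hb)⟩, ?_⟩
    exact natW_lt_natW (by norm_num)

lemma perfect_M2 : PerfectModelWrt (fun _ => zeroW) P2 M2 := by
  refine ⟨model_M2, fun N hN hne A₁ hA₁ => ?_⟩
  obtain ⟨hA₁M, hA₁N⟩ := hA₁
  rcases hA₁M with ⟨b, rfl, hb⟩
  exact absurd (forcedQ2 hN hb) hA₁N

/-- any perfect model of `P₂` is contained in `M2` -/
lemma perfect_P2_sub {M : Set (GrAtm Pd ℝ)} (h : IsPerfectModel P2 M) : M = M2 := by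
  obtain ⟨σ, _, hMmod, hpref⟩ := h
  by_contra hne
  have hsub : M2 ⊆ M := by
    rintro x ⟨b, rfl, hb⟩
    exact forcedQ2 hMmod hb
  obtain ⟨A₁, hA₁M, hA₁M2⟩ : ∃ A₁, A₁ ∈ M ∧ A₁ ∉ M2 := by
    by_contra h'
    push_neg at h'
    exact hne (le_antisymm h' hsub)
  obtain ⟨A₂, ⟨hA₂M2, hA₂M⟩, _⟩ := hpref M2 model_M2 (fun h' => hne h'.symm) A₁ ⟨hA₁M, hA₁M2⟩
  exact hA₂M (hsub hA₂M2)

/-- in any perfect model of `P₀`, no `q(b)` with `b < 0` -/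
lemma perfect_P0_noq {M : Set (GrAtm Pd ℝ)} {σ : GrAtm Pd ℝ → W}
    (hstrat : locStratWrt σ P0) (hMmod : isModel M P0)
    (hpref : ∀ N, isModel N P0 → N ≠ M → pref σ M N) :
    ∀ b : ℝ, b < 0 → ((Pd.q, [b]) : GrAtm Pd ℝ) ∉ M := by
  by_contra h
  push_neg at h
  obtain ⟨b₀, hb₀, hq₀⟩ := h
  set S : Set Ordinal.{0} :=
    {o | ∃ b : ℝ, b < 0 ∧ ((Pd.q, [b]) : GrAtm Pd ℝ) ∈ M ∧ (σ (Pd.q, [b])).1 = o} with hS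
  have hSne : S.Nonempty := ⟨(σ (Pd.q, [b₀])).1, b₀, hb₀, hq₀, rfl⟩
  obtain ⟨b, hb, hq, hmin⟩ := Ordinal.lt_wf.min_mem S hSne
  have hMne : M0 ≠ M := by
    intro h'
    rw [← h'] at hq
    exact absurd (q_mem_M0.mp hq) (not_le.mpr hb)
  have hA₁ : ((Pd.q, [b]) : GrAtm Pd ℝ) ∈ M \ M0 :=
    ⟨hq, fun h' => absurd (q_mem_M0.mp h') (not_le.mpr hb)⟩
  obtain ⟨A₂, ⟨hA₂M0, hA₂M⟩, hlt⟩ := hpref M0 model_M0 hMne _ hA₁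
  rcases hA₂M0 with ⟨b', ⟨rfl, hb'⟩ | ⟨rfl, hb'⟩⟩
  · exact hA₂M (forcedQ0 hMmod hb')
  · -- A₂ = (p, [b']) with b' < 0, p(b') ∉ M, σ(p,[b']) < σ(q,[b])
    have hq' : ((Pd.q, [b']) : GrAtm Pd ℝ) ∈ M := by
      by_contra hq'
      exact hA₂M (clause1P0 hMmod hq')
    have hstr : σ ((Pd.q, [b']) : GrAtm Pd ℝ) < σ ((Pd.p, [b']) : GrAtm Pd ℝ) := by
      have := hstrat ⟨atomP, fun _ => True, [(false, atomQ)]⟩ (by simp [P0])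
        (fun _ => b') trivial (false, atomQ) (by simp)
      exact this.2 rfl
    have hlt2 : (σ ((Pd.q, [b']) : GrAtm Pd ℝ)).1 < (σ ((Pd.q, [b]) : GrAtm Pd ℝ)).1 :=
      lt_trans hstr hlt
    rw [hmin] at hlt2
    exact Ordinal.lt_wf.not_lt_min S ⟨b', hb', hq', rfl⟩ hlt2

/-- With the constraints interpreted over the real numbers, both
`P₀` and `P₂` have perfect models and, for every real number `a < 0`, the ground
atom `p(a)` belongs to the perfect model `M(P₀)` but does not belong to the perfect
model `M(P₂)`. -/
theorem p_in_M_P0_not_in_M_P2 :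
    (∃ M, IsPerfectModel P0 M) ∧ (∃ M, IsPerfectModel P2 M) ∧
    ∀ a : ℝ, a < 0 →
      (∀ M, IsPerfectModel P0 M → ((Pd.p, [a]) : GrAtm Pd ℝ) ∈ M) ∧
      (∀ M, IsPerfectModel P2 M → ((Pd.p, [a]) : GrAtm Pd ℝ) ∉ M) := by
  refine ⟨⟨M0, sig0, strat0, perfect_M0⟩, ⟨M2, fun _ => zeroW, strat2, perfect_M2⟩,
    fun a ha => ⟨?_, ?_⟩⟩
  · rintro M ⟨σ, hstrat, hMmod, hpref⟩
    have hq : ((Pd.q, [a]) : GrAtm Pd ℝ) ∉ M := perfect_P0_noq hstrat hMmod hpref a ha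
    exact clause1P0 hMmod hq
  · intro M hM
    rw [perfect_P2_sub hM]
    exact p_not_mem_M2

end Stmt12
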